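/- FISTA-type accelerated convergence for the constrained problem: with the momentum sequence y^k = β^k + ((t_k − 1)/t_{k+1})(β^k − β^{k−1}), t_{k+1} = (1 + √(1 + 4t_k²))/2, t₁ = 1, and β^{k+1} the proximal step at z^k = y^k − (1/L)∇l(y^k), the objective satisfies F(β^k) − F(β*) ≤ 2L‖β⁰ − β*‖²/(k+1)². -/

import Mathlib

open scoped RealInnerProductSpace

set_option linter.unusedSectionVars false
set_option maxHeartbeats 1000000


section aux
variable {H : Type*} [NormedAddCommGroup H] [InnerProductSpace ℝ H] [CompleteSpace H]

/-- MVT: if φ has derivative φ' everywhere and φ'(0) ≤ φ'(c) for c ∈ (0,1), then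
φ(0) + φ'(0) ≤ φ(1). -/
private lemma mvt_mono (φ φ' : ℝ → ℝ) (hφ : ∀ t, HasDerivAt φ (φ' t) t)
    (hmono : ∀ c ∈ Set.Ioo (0:ℝ) 1, φ' 0 ≤ φ' c) : φ 0 + φ' 0 ≤ φ 1 := by
  obtain ⟨c, hc, hceq⟩ := exists_hasDerivAt_eq_slope φ φ' one_pos
    (fun t _ => (hφ t).continuousAt.continuousWithinAt) (fun t _ => hφ t)
  have := hmono c hc
  rw [hceq] at this
  simp only [sub_zero, div_one] at this
  linarith

private lemma line_hasDerivAt (f : H → ℝ) (g : H → H) (hg : ∀ x, HasGradientAt f (g x) x)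
    (c d : H) (t : ℝ) :
    HasDerivAt (fun s : ℝ => f (c + s • d)) ⟪g (c + t • d), d⟫ t := by
  have h1 : HasDerivAt (fun s : ℝ => c + s • d) d t := by
    simpa using ((hasDerivAt_id t).smul_const d).const_add c
  have h2 := (hasGradientAt_iff_hasFDerivAt.mp (hg (c + t • d))).comp_hasDerivAt t h1
  simp only [InnerProductSpace.toDual_apply_apply] at h2
  exact h2

/-- Descent lemma. -/
private lemma descent_lemma (f : H → ℝ) (g : H → H) (L : ℝ) (hL : 0 < L)
    (hg : ∀ x, HasGradientAt f (g x) x) (hlip : LipschitzWith L.toNNReal g) (x y : H) :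
    f x ≤ f y + ⟪g y, x - y⟫ + L / 2 * ‖x - y‖ ^ 2 := by
  set d := x - y with hd
  have hline : ∀ t : ℝ, HasDerivAt (fun s : ℝ => y + s • d) d t := fun t => by
    simpa using ((hasDerivAt_id t).smul_const d).const_add y
  set φ : ℝ → ℝ := fun s => L / 2 * ⟪y + s • d, y + s • d⟫ - f (y + s • d) with hφdef
  set φ' : ℝ → ℝ := fun s => L * ⟪y + s • d, d⟫ - ⟪g (y + s • d), d⟫ with hφ'def
  have hφ : ∀ t, HasDerivAt φ (φ' t) t := by
    intro t
    have h1 := ((hline t).inner ℝ (hline t)).const_mul (L / 2)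
    have h2 := line_hasDerivAt f g hg y d t
    have h3 := h1.sub h2
    have h4 : φ' t = L / 2 * (⟪y + t • d, d⟫ + ⟪d, y + t • d⟫) - ⟪g (y + t • d), d⟫ := by
      show L * ⟪y + t • d, d⟫ - ⟪g (y + t • d), d⟫ = _
      rw [real_inner_comm d]
      ring
    rw [h4]
    exact h3
  have hmono : ∀ c ∈ Set.Ioo (0:ℝ) 1, φ' 0 ≤ φ' c := by
    intro c hc
    have hlipc : ‖g (y + c • d) - g y‖ ≤ L * (c * ‖d‖) := by
      have := hlip.dist_le_mul (y + c • d) y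
      rw [Real.coe_toNNReal L hL.le, dist_eq_norm, dist_eq_norm] at this
      calc ‖g (y + c • d) - g y‖ ≤ L * ‖y + c • d - y‖ := this
        _ = L * (c * ‖d‖) := by
            rw [add_sub_cancel_left, norm_smul, Real.norm_eq_abs, abs_of_pos hc.1]
    have hcs : ⟪g (y + c • d) - g y, d⟫ ≤ ‖g (y + c • d) - g y‖ * ‖d‖ :=
      real_inner_le_norm _ _
    have hinner : ⟪y + c • d, d⟫ = ⟪y, d⟫ + c * ⟪d, d⟫ := by
      rw [inner_add_left, real_inner_smul_left]
    have hdd : ⟪d, d⟫ = ‖d‖ ^ 2 := real_inner_self_eq_norm_sq d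
    have hsub : ⟪g (y + c • d) - g y, d⟫ = ⟪g (y + c • d), d⟫ - ⟪g y, d⟫ :=
      inner_sub_left _ _ _
    simp only [hφ'def]
    have h0s : (0:ℝ) • d = 0 := zero_smul _ _
    rw [h0s, add_zero] at *
    have hmul := mul_le_mul_of_nonneg_right hlipc (norm_nonneg d)
    have h5 : L * ⟪y + c • d, d⟫ = L * ⟪y, d⟫ + L * c * ‖d‖ ^ 2 := by
      rw [hinner, hdd]; ring
    have h7 : L * (c * ‖d‖) * ‖d‖ = L * c * ‖d‖ ^ 2 := by ring
    linarith [hcs, hmul, hsub, h5, h7]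
  have key := mvt_mono φ φ' hφ hmono
  have e1 : φ 1 = L / 2 * ⟪x, x⟫ - f x := by simp [hφdef, hd]
  have e0 : φ 0 = L / 2 * ⟪y, y⟫ - f y := by simp [hφdef]
  have e0' : φ' 0 = L * ⟪y, d⟫ - ⟪g y, d⟫ := by simp [hφ'def]
  rw [e1, e0, e0'] at key
  have hnorm : ‖x - y‖ ^ 2 = ⟪x, x⟫ - 2 * ⟪y, x - y⟫ - ⟪y, y⟫ := by
    rw [← real_inner_self_eq_norm_sq]
    simp only [inner_sub_left, inner_sub_right, real_inner_comm x y]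
    ring
  have hyd : ⟪y, d⟫ = ⟪y, x - y⟫ := rfl
  nlinarith [key]

/-- gradient inequality for convex functions -/
private lemma convex_grad_ineq (f : H → ℝ) (g : H → H) (hf : ConvexOn ℝ Set.univ f)
    (hg : ∀ x, HasGradientAt f (g x) x) (x y : H) :
    f y + ⟪g y, x - y⟫ ≤ f x := by
  set φ : ℝ → ℝ := fun s => f (y + s • (x - y)) with hφdef
  have hφc : ConvexOn ℝ Set.univ φ := by
    have h := hf.comp_affineMap (AffineMap.lineMap y x : ℝ →ᵃ[ℝ] H)
    have : ((fun z => f z) ∘ (AffineMap.lineMap y x : ℝ →ᵃ[ℝ] H)) = φ := by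
      funext s
      simp [hφdef, AffineMap.lineMap_apply, add_comm]
    rw [this] at h
    simpa using h
  have hder : HasDerivAt φ ⟪g y, x - y⟫ 0 := by
    have := line_hasDerivAt f g hg y (x - y) 0
    simpa using this
  have h := hφc.le_slope_of_hasDerivAt (Set.mem_univ (0:ℝ)) (Set.mem_univ (1:ℝ)) one_pos hder
  rw [slope_def_field] at h
  have e1 : φ 1 = f x := by simp [hφdef]
  have e0 : φ 0 = f y := by simp [hφdef]
  rw [e1, e0] at h
  simp at h
  linarith [h]



private lemma three_point (x p z : H) :
    ‖x - z‖ ^ 2 = ‖p - z‖ ^ 2 + ‖x - p‖ ^ 2 + 2 * ⟪p - z, x - p⟫ := by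
  have h : x - z = (p - z) + (x - p) := by abel
  rw [h, norm_add_sq_real]
  ring

private lemma comb_norm_sq (u v : H) (θ : ℝ) :
    ‖(1 - θ) • u + θ • v‖ ^ 2
      = (1 - θ) * ‖u‖ ^ 2 + θ * ‖v‖ ^ 2 - θ * (1 - θ) * ‖v - u‖ ^ 2 := by
  have h1 : ‖(1 - θ) • u + θ • v‖ ^ 2 = ⟪(1 - θ) • u + θ • v, (1 - θ) • u + θ • v⟫ :=
    (real_inner_self_eq_norm_sq _).symm
  have h2 : ‖v - u‖ ^ 2 = ⟪v - u, v - u⟫ := (real_inner_self_eq_norm_sq _).symm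
  have hu : ‖u‖ ^ 2 = ⟪u, u⟫ := (real_inner_self_eq_norm_sq _).symm
  have hv : ‖v‖ ^ 2 = ⟪v, v⟫ := (real_inner_self_eq_norm_sq _).symm
  rw [h1, h2, hu, hv]
  simp only [inner_add_left, inner_add_right, inner_sub_left, inner_sub_right,
    real_inner_smul_left, real_inner_smul_right, real_inner_comm u v]
  ring

private lemma strong_min {S : Set H}
    (hSconv : ∀ a b : H, ∀ θ : ℝ, a ∈ S → b ∈ S → 0 ≤ θ → θ ≤ 1 → (1-θ)•a + θ•b ∈ S)
    (Γ : H → ℝ)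
    (hΓ : ∀ a b : H, ∀ θ : ℝ, 0 ≤ θ → θ ≤ 1 → Γ ((1-θ)•a + θ•b) ≤ (1-θ)*Γ a + θ*Γ b)
    (z p : H) (hp : p ∈ S)
    (hmin : ∀ b ∈ S, (1/2)*‖p-z‖^2 + Γ p ≤ (1/2)*‖b-z‖^2 + Γ b)
    (x : H) (hx : x ∈ S) :
    (1/2)*‖p-z‖^2 + Γ p + (1/2)*‖x-p‖^2 ≤ (1/2)*‖x-z‖^2 + Γ x := by
  refine le_of_forall_pos_le_add fun ε hε => ?_
  set D := ‖x - p‖^2 with hD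
  have hD0 : 0 ≤ D := sq_nonneg _
  set θ : ℝ := min 1 (2*ε/(D+1)) with hθdef
  have hθpos : 0 < θ := lt_min one_pos (by positivity)
  have hθ1 : θ ≤ 1 := min_le_left _ _
  have hmem := hSconv p x θ hp hx hθpos.le hθ1
  have h1 := hmin _ hmem
  have h2 := hΓ p x θ hθpos.le hθ1
  have h5 : ‖(1-θ)•p + θ•x - z‖^2
      = (1-θ)*‖p-z‖^2 + θ*‖x-z‖^2 - θ*(1-θ)*D := by
    rw [show (1-θ)•p + θ•x - z = (1-θ)•(p-z) + θ•(x-z) by module,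
      comb_norm_sq (p-z) (x-z) θ, show (x-z)-(p-z) = x - p by abel]
  rw [h5] at h1
  have h7 : θ * ((1/2)*‖p-z‖^2 + Γ p + ((1-θ)/2)*D) ≤ θ * ((1/2)*‖x-z‖^2 + Γ x) := by
    nlinarith [h1, h2]
  have h8 := le_of_mul_le_mul_left h7 hθpos
  have hθD : θ * D ≤ 2*ε := by
    have hle : θ ≤ 2*ε/(D+1) := min_le_right _ _
    have hD1 : (0:ℝ) < D + 1 := by positivity
    calc θ*D ≤ (2*ε/(D+1))*D := mul_le_mul_of_nonneg_right hle hD0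
      _ ≤ 2*ε := by rw [div_mul_eq_mul_div, div_le_iff₀ hD1]; nlinarith
  linarith

end aux



open Finset in
/-- FISTA-type `O(1/k²)` accelerated convergence for the nonnegatively constrained
generalized fused lasso: with momentum sequence `t₁ = 1`,
`t_{k+1} = (1 + √(1 + 4t_k²))/2`, `y^{k+1} = β^k + ((t_k − 1)/t_{k+1})(β^k − β^{k−1})`,
and `β^k` the proximal step at `y^k − (1/L)∇l(y^k)`, the objective satisfies
`F(β^k) − F(β*) ≤ 2L‖β⁰ − β*‖²/(k+1)²`. -/
theorem stmt_7 (d : ℕ) (hd : 1 ≤ d)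
    (l : EuclideanSpace ℝ (Fin d) → ℝ) (gl : EuclideanSpace ℝ (Fin d) → EuclideanSpace ℝ (Fin d))
    (L : ℝ) (hL : 0 < L)
    (hconv : ConvexOn ℝ Set.univ l)
    (hgrad : ∀ x, HasGradientAt l (gl x) x)
    (hlip : LipschitzWith L.toNNReal gl)
    (lam1 lam2 : ℝ) (hlam1 : 0 ≤ lam1) (hlam2 : 0 ≤ lam2)
    (E : Finset (Fin d × Fin d)) (w : Fin d × Fin d → ℝ) (hw : ∀ e ∈ E, 0 ≤ w e)
    (F : EuclideanSpace ℝ (Fin d) → ℝ)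
    (hF : ∀ β, F β = l β + lam1 * ∑ i, |β i| + lam2 * ∑ e ∈ E, w e * |β e.1 - β e.2|)
    (βstar : EuclideanSpace ℝ (Fin d)) (hβstar_pos : ∀ i, 0 ≤ βstar i)
    (hβstar_min : ∀ β : EuclideanSpace ℝ (Fin d), (∀ i, 0 ≤ β i) → F βstar ≤ F β)
    (β y : ℕ → EuclideanSpace ℝ (Fin d)) (t : ℕ → ℝ)
    (hβ0_pos : ∀ i, 0 ≤ β 0 i)
    (ht1 : t 1 = 1)
    (htrec : ∀ k : ℕ, 1 ≤ k → t (k + 1) = (1 + Real.sqrt (1 + 4 * (t k)^2)) / 2)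
    (hy1 : y 1 = β 0)
    (hyrec : ∀ k : ℕ, 1 ≤ k →
      y (k + 1) = β k + ((t k - 1) / t (k + 1)) • (β k - β (k - 1)))
    (hstep : ∀ k : ℕ, 1 ≤ k →
      (∀ i, 0 ≤ β k i) ∧
      (∀ b : EuclideanSpace ℝ (Fin d), (∀ i, 0 ≤ b i) →
        (1/2) * ‖β k - (y k - (1 / L) • gl (y k))‖^2
            + (lam1 / L) * ∑ i, |β k i|
            + (lam2 / L) * ∑ e ∈ E, w e * |β k e.1 - β k e.2|
          ≤ (1/2) * ‖b - (y k - (1 / L) • gl (y k))‖^2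
            + (lam1 / L) * ∑ i, |b i|
            + (lam2 / L) * ∑ e ∈ E, w e * |b e.1 - b e.2|)) :
    ∀ k : ℕ, 1 ≤ k → F (β k) - F βstar ≤ 2 * L * ‖β 0 - βstar‖^2 / (k + 1)^2 := by
  classical
  have hLne : L ≠ 0 := ne_of_gt hL
  set G : EuclideanSpace ℝ (Fin d) → ℝ :=
    fun b => lam1 * ∑ i, |b i| + lam2 * ∑ e ∈ E, w e * |b e.1 - b e.2| with hG
  have hFG : ∀ z, F z = l z + G z := by
    intro z; rw [hF z]; simp only [hG]; ring
  set S : Set (EuclideanSpace ℝ (Fin d)) := {b | ∀ i, 0 ≤ b i} with hSdef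
  have hSconv : ∀ a b : EuclideanSpace ℝ (Fin d), ∀ θ : ℝ, a ∈ S → b ∈ S → 0 ≤ θ → θ ≤ 1 →
      (1-θ)•a + θ•b ∈ S := by
    intro a b θ ha hb h0 h1 i
    have hco : ((1-θ)•a + θ•b) i = (1-θ) * a i + θ * b i := rfl
    rw [hco]
    have h2 := ha i
    have h3 := hb i
    have h4 : (0:ℝ) ≤ 1 - θ := by linarith
    positivity
  have habs : ∀ (p q θ : ℝ), 0 ≤ θ → θ ≤ 1 → |(1-θ)*p + θ*q| ≤ (1-θ)*|p| + θ*|q| := by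
    intro p q θ h0 h1
    calc |(1-θ)*p + θ*q| ≤ |(1-θ)*p| + |θ*q| := abs_add_le _ _
      _ = (1-θ)*|p| + θ*|q| := by
          rw [abs_mul, abs_mul, abs_of_nonneg (by linarith : (0:ℝ) ≤ 1-θ), abs_of_nonneg h0]
  have hGconv : ∀ a b : EuclideanSpace ℝ (Fin d), ∀ θ : ℝ, 0 ≤ θ → θ ≤ 1 →
      G ((1-θ)•a + θ•b) ≤ (1-θ) * G a + θ * G b := by
    intro a b θ h0 h1
    have hcoord : ∀ i, ((1-θ)•a + θ•b) i = (1-θ) * a i + θ * b i := fun i => rfl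
    have hs1 : ∑ i, |((1-θ)•a + θ•b) i| ≤ (1-θ) * ∑ i, |a i| + θ * ∑ i, |b i| := by
      rw [Finset.mul_sum, Finset.mul_sum, ← Finset.sum_add_distrib]
      refine Finset.sum_le_sum fun i _ => ?_
      rw [hcoord]; exact habs _ _ θ h0 h1
    have hs2 : ∑ e ∈ E, w e * |((1-θ)•a + θ•b) e.1 - ((1-θ)•a + θ•b) e.2|
        ≤ (1-θ) * ∑ e ∈ E, w e * |a e.1 - a e.2| + θ * ∑ e ∈ E, w e * |b e.1 - b e.2| := by
      rw [Finset.mul_sum, Finset.mul_sum, ← Finset.sum_add_distrib]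
      refine Finset.sum_le_sum fun e he => ?_
      rw [hcoord, hcoord]
      have heq : (1-θ)*a e.1 + θ*b e.1 - ((1-θ)*a e.2 + θ*b e.2)
          = (1-θ)*(a e.1 - a e.2) + θ*(b e.1 - b e.2) := by ring
      rw [heq]
      calc w e * |(1-θ)*(a e.1 - a e.2) + θ*(b e.1 - b e.2)|
          ≤ w e * ((1-θ)*|a e.1 - a e.2| + θ*|b e.1 - b e.2|) :=
            mul_le_mul_of_nonneg_left (habs _ _ θ h0 h1) (hw e he)
        _ = (1-θ)*(w e * |a e.1 - a e.2|) + θ*(w e * |b e.1 - b e.2|) := by ring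
    simp only [hG]
    have m1 := mul_le_mul_of_nonneg_left hs1 hlam1
    have m2 := mul_le_mul_of_nonneg_left hs2 hlam2
    nlinarith [m1, m2]
  have hFconv : ∀ a b : EuclideanSpace ℝ (Fin d), ∀ θ : ℝ, 0 ≤ θ → θ ≤ 1 →
      F ((1-θ)•a + θ•b) ≤ (1-θ) * F a + θ * F b := by
    intro a b θ h0 h1
    have hl := hconv.2 (Set.mem_univ a) (Set.mem_univ b)
      (by linarith : (0:ℝ) ≤ 1-θ) h0 (by ring)
    have hg := hGconv a b θ h0 h1
    rw [hFG, hFG, hFG]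
    simp only [smul_eq_mul] at hl
    linarith
  have hfeas0 : βstar ∈ S := hβstar_pos
  have core : ∀ k : ℕ, 1 ≤ k → ∀ x : EuclideanSpace ℝ (Fin d), x ∈ S →
      ‖β k - x‖^2 - ‖y k - x‖^2 ≤ 2/L * (F x - F (β k)) := by
    intro k hk x hx
    obtain ⟨hpS, hstep2⟩ := hstep k hk
    set p := β k with hp
    set yk := y k with hyk
    set z := yk - (1 / L) • gl yk with hz
    have hψ : ∀ b ∈ S, (1/2)*‖p-z‖^2 + (1/L)*G p ≤ (1/2)*‖b-z‖^2 + (1/L)*G b := by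
      intro b hb
      have h := hstep2 b hb
      have e : ∀ c : EuclideanSpace ℝ (Fin d),
          (lam1 / L) * ∑ i, |c i| + (lam2 / L) * ∑ e ∈ E, w e * |c e.1 - c e.2|
            = (1/L)*G c := by
        intro c; simp only [hG]; field_simp
      have e1 := e p
      have e2 := e b
      linarith [h]
    have hΓconv : ∀ a b : EuclideanSpace ℝ (Fin d), ∀ θ : ℝ, 0 ≤ θ → θ ≤ 1 →
        (fun c => (1/L)*G c) ((1-θ)•a + θ•b) ≤ (1-θ)*((fun c => (1/L)*G c) a)
          + θ*((fun c => (1/L)*G c) b) := by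
      intro a b θ h0 h1
      simp only
      have hgc := hGconv a b θ h0 h1
      have hL' : (0:ℝ) ≤ 1/L := by positivity
      nlinarith [mul_le_mul_of_nonneg_left hgc hL']
    have hsm := strong_min hSconv (fun c => (1/L)*G c) hΓconv z p hpS hψ x hx
    have htp := three_point x p z
    have hvar : 0 ≤ ⟪p - z, x - p⟫ + (1/L)*G x - (1/L)*G p := by linarith
    have hdes := descent_lemma l gl L hL hgrad hlip p yk
    have hcvx := convex_grad_ineq l gl hconv hgrad x yk
    have ii1 : ⟪p - z, x - p⟫ = ⟪p - yk, x - p⟫ + (1/L) * ⟪gl yk, x - p⟫ := by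
      rw [show p - z = (p - yk) + (1/L) • gl yk by rw [hz]; module]
      rw [inner_add_left, real_inner_smul_left]
    have ii2 : ⟪gl yk, x - yk⟫ = ⟪gl yk, x - p⟫ + ⟪gl yk, p - yk⟫ := by
      rw [← inner_add_right]
      congr 1
      abel
    rw [ii1] at hvar
    have hvar2 : 0 ≤ L*⟪p - yk, x - p⟫ + ⟪gl yk, x - p⟫ + G x - G p := by
      have hm := mul_nonneg hL.le hvar
      have heq : L * (⟪p - yk, x - p⟫ + (1/L) * ⟪gl yk, x - p⟫ + (1/L)*G x - (1/L)*G p)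
          = L*⟪p - yk, x - p⟫ + ⟪gl yk, x - p⟫ + G x - G p := by
        field_simp
      rw [heq] at hm
      exact hm
    rw [ii2] at hcvx
    have hFlow : -L*⟪p - yk, x - p⟫ - L/2 * ‖p - yk‖^2 ≤ F x - F p := by
      rw [hFG x, hFG p]
      have hsum1 : ⟪gl yk, x - p⟫ - L/2 * ‖p - yk‖^2 ≤ l x - l p := by linarith [hdes, hcvx]
      set A1 : ℝ := ⟪p - yk, x - p⟫ with hA1
      set A2 : ℝ := ⟪gl yk, x - p⟫ with hA2
      set N : ℝ := ‖p - yk‖^2 with hN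
      clear_value A1 A2 N G p yk z
      linarith only [hsum1, hvar2]
    have htp2 := three_point p yk x
    have ii3 : ⟪yk - x, p - yk⟫ = -‖p - yk‖^2 - ⟪p - yk, x - p⟫ := by
      rw [real_inner_comm]
      rw [show yk - x = (yk - p) + (p - x) by abel, inner_add_right]
      rw [show yk - p = -(p - yk) by abel, inner_neg_right, real_inner_self_eq_norm_sq]
      rw [show p - x = -(x - p) by abel, inner_neg_right]
      ring
    have hnorm : ‖p - x‖^2 - ‖yk - x‖^2 = -‖p - yk‖^2 - 2*⟪p - yk, x - p⟫ := by
      rw [htp2, ii3]; ring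
    have h2L := mul_le_mul_of_nonneg_left hFlow (by positivity : (0:ℝ) ≤ 2/L)
    have heq2 : 2/L * (-L*⟪p - yk, x - p⟫ - L/2 * ‖p - yk‖^2)
        = -2*⟪p - yk, x - p⟫ - ‖p - yk‖^2 := by
      field_simp
    rw [heq2] at h2L
    linarith [hnorm, h2L]
  have htpos : ∀ k : ℕ, 1 ≤ k → 1 ≤ t k := by
    intro k hk
    induction k with
    | zero => omega
    | succ n ih =>
      rcases Nat.lt_or_ge n 1 with hn | hn
      · have : n = 0 := by omega
        subst this
        rw [ht1]
      · rw [htrec n hn]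
        have hs := Real.sqrt_le_sqrt (show (1:ℝ) ≤ 1 + 4*(t n)^2 by nlinarith [sq_nonneg (t n)])
        rw [Real.sqrt_one] at hs
        linarith
  have htlb : ∀ k : ℕ, 1 ≤ k → ((k:ℝ)+1)/2 ≤ t k := by
    intro k hk
    induction k with
    | zero => omega
    | succ n ih =>
      rcases Nat.lt_or_ge n 1 with hn | hn
      · have : n = 0 := by omega
        subst this
        rw [ht1]; norm_num
      · have ihn := ih hn
        rw [htrec n hn]
        have h1 : Real.sqrt (4*(t n)^2) ≤ Real.sqrt (1 + 4*(t n)^2) :=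
          Real.sqrt_le_sqrt (by nlinarith [sq_nonneg (t n)])
        have h2 : Real.sqrt (4*(t n)^2) = 2*t n := by
          rw [show 4*(t n)^2 = (2*t n)^2 by ring]
          exact Real.sqrt_sq (by linarith [htpos n hn])
        rw [h2] at h1
        push_cast
        linarith
  have htsq : ∀ k : ℕ, 1 ≤ k → (t (k+1))^2 - t (k+1) = (t k)^2 := by
    intro k hk
    rw [htrec k hk]
    have hs : Real.sqrt (1 + 4*(t k)^2)^2 = 1 + 4*(t k)^2 :=
      Real.sq_sqrt (by nlinarith [sq_nonneg (t k)])
    linear_combination hs / 4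
  have humom : ∀ k : ℕ, 1 ≤ k →
      t (k+1) • y (k+1) - (t (k+1) - 1) • β k - βstar
        = t k • β k - (t k - 1) • β (k-1) - βstar := by
    intro k hk
    have hT1 := htpos (k+1) (by omega)
    have hTne : t (k+1) ≠ 0 := by linarith
    rw [hyrec k hk, smul_add, smul_smul,
      show t (k+1) * ((t k - 1)/t (k+1)) = t k - 1 from by field_simp]
    module
  set B := ‖β 0 - βstar‖^2 with hB
  set v : ℕ → ℝ := fun k => F (β k) - F βstar with hv
  set u : ℕ → EuclideanSpace ℝ (Fin d) :=
    fun k => t k • β k - (t k - 1) • β (k-1) - βstar with huu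
  have schain : ∀ k : ℕ, 1 ≤ k → 2/L * (t k)^2 * v k + ‖u k‖^2 ≤ B := by
    intro k hk
    induction k with
    | zero => omega
    | succ n ih =>
      rcases Nat.lt_or_ge n 1 with hn | hn
      · have hn0 : n = 0 := by omega
        subst hn0
        have hc := core 1 le_rfl βstar hfeas0
        rw [hy1] at hc
        have hu1 : u 1 = β 1 - βstar := by
          simp only [huu, ht1]
          norm_num
        have hveq : v 1 = F (β 1) - F βstar := rfl
        rw [hu1, ht1, hveq]
        have hB' : ‖β 0 - βstar‖^2 = B := rfl
        nlinarith [hc]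
      · have ihn := ih hn
        have hT1 : 1 ≤ t (n+1) := htpos (n+1) (by omega)
        have hT0 : (0:ℝ) < t (n+1) := by linarith
        have hTne : t (n+1) ≠ 0 := ne_of_gt hT0
        have hθ0 : (0:ℝ) ≤ 1/t (n+1) := by positivity
        have hθ1 : 1/t (n+1) ≤ 1 := by rw [div_le_one hT0]; exact hT1
        set xh := (1 - 1/t (n+1)) • β n + (1/t (n+1)) • βstar with hxh
        have hxhS : xh ∈ S := hSconv (β n) βstar (1/t (n+1)) (hstep n hn).1 hfeas0 hθ0 hθ1
        have hc := core (n+1) (by omega) xh hxhS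
        have hFxh := hFconv (β n) βstar (1/t (n+1)) hθ0 hθ1
        rw [← hxh] at hFxh
        have hmom := humom n hn
        have e1 : u (n+1) = t (n+1) • (β (n+1) - xh) := by
          simp only [huu, hxh, Nat.add_sub_cancel]
          match_scalars <;> field_simp
        have e2 : y (n+1) - xh = (1/t (n+1)) • u n := by
          rw [show u n = t (n+1) • y (n+1) - (t (n+1) - 1) • β n - βstar from by
            simp only [huu]; rw [hmom], hxh]
          match_scalars <;> field_simp
        have hn1 : ‖u (n+1)‖^2 = (t (n+1))^2 * ‖β (n+1) - xh‖^2 := by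
          rw [e1, norm_smul, Real.norm_eq_abs, mul_pow, sq_abs]
        have hn2 : (t (n+1))^2 * ‖y (n+1) - xh‖^2 = ‖u n‖^2 := by
          rw [e2, norm_smul, Real.norm_eq_abs, mul_pow, sq_abs]
          field_simp
        have hc2 := mul_le_mul_of_nonneg_left hc (by positivity : (0:ℝ) ≤ (t (n+1))^2)
        have hFstep : F xh - F (β (n+1)) ≤ (1 - 1/t (n+1)) * F (β n)
            + (1/t (n+1)) * F βstar - F (β (n+1)) := by linarith
        have hc3 : ‖u (n+1)‖^2 - ‖u n‖^2
            ≤ (t (n+1))^2 * (2/L * ((1 - 1/t (n+1)) * F (β n)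
              + (1/t (n+1)) * F βstar - F (β (n+1)))) := by
          have hm2 := mul_le_mul_of_nonneg_left
            (mul_le_mul_of_nonneg_left hFstep (by positivity : (0:ℝ) ≤ 2/L))
            (by positivity : (0:ℝ) ≤ (t (n+1))^2)
          nlinarith [hc2, hn1, hn2, hm2]
        have hts := htsq n hn
        have heq3 : (t (n+1))^2 * (2/L * ((1 - 1/t (n+1)) * F (β n)
              + (1/t (n+1)) * F βstar - F (β (n+1))))
            = 2/L * ((t n)^2 * v n - (t (n+1))^2 * v (n+1)) := by
          simp only [hv]
          rw [← hts]
          field_simp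
          ring
        rw [heq3] at hc3
        nlinarith [ihn, hc3]
  intro k hk
  have hs := schain k hk
  have htk := htlb k hk
  have htk1 := htpos k hk
  have htk0 : (0:ℝ) < t k := by linarith
  have hB0 : (0:ℝ) ≤ B := sq_nonneg _
  have hun : (0:ℝ) ≤ ‖u k‖^2 := sq_nonneg _
  have h1 : 2/L * (t k)^2 * v k ≤ B := by linarith
  have hvk0 : 0 ≤ v k := by
    have := hβstar_min (β k) (hstep k hk).1
    simp only [hv]
    linarith
  have h2 : 2*(t k)^2 * v k ≤ L*B := by
    have hm := mul_le_mul_of_nonneg_left h1 hL.le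
    have heqq : L * (2/L * (t k)^2 * v k) = 2*(t k)^2*v k := by field_simp
    rw [heqq] at hm
    exact hm
  have hk2 : ((k:ℝ)+1)^2 ≤ 4*(t k)^2 := by
    have hsq := mul_self_le_mul_self (by positivity : (0:ℝ) ≤ ((k:ℝ)+1)/2) htk
    nlinarith [hsq]
  have hkp : (0:ℝ) < ((k:ℝ)+1)^2 := by positivity
  show v k ≤ 2 * L * B / ((k:ℝ) + 1)^2
  rw [le_div_iff₀ hkp]
  nlinarith [mul_le_mul_of_nonneg_left hk2 hvk0, h2]
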